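/- In particular (the case A = 0, R = 1 of the saddle point lemma): for fixed B > 0 and θ > 0, (1/2πi)∫_{C₁(B/√n)} e^{B²/z + nz} dz = (√B/(2√π)) n^{-3/4} e^{2B√n} (1 + O(n^{-1/2})) as n → ∞, where C₁(B/√n) = { (B/√n)(1+iy) : |y| ≤ θ }. -/

import Mathlib

open Real Complex Filter intervalIntegral

lemma cube_le_exp {t : ℝ} (ht : 0 ≤ t) : t ^ 3 ≤ 48 * Real.exp (t / 2) := by
  have h := Real.sum_le_exp_of_nonneg (x := t/2) (by linarith) 4
  simp [Finset.sum_range_succ, Nat.factorial] at h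
  nlinarith [Real.exp_pos (t/2)]

lemma sq_le_exp {t : ℝ} (ht : 0 ≤ t) : t ^ 2 ≤ 8 * Real.exp (t / 2) := by
  have h := Real.sum_le_exp_of_nonneg (x := t/2) (by linarith) 3
  simp [Finset.sum_range_succ, Nat.factorial] at h
  nlinarith [Real.exp_pos (t/2)]

lemma norm_exp_sub_one_sub_le (w : ℂ) : ‖Complex.exp w - 1 - w‖ ≤ 3 * ‖w‖ ^ 2 * Real.exp ‖w‖ := by
  rcases le_or_gt ‖w‖ 1 with h | h
  · have := Complex.norm_exp_sub_one_sub_id_le (x := w) h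
    calc ‖Complex.exp w - 1 - w‖ ≤ ‖w‖ ^ 2 := this
    _ ≤ 3 * ‖w‖ ^ 2 * Real.exp ‖w‖ := by
        nlinarith [Real.one_le_exp (norm_nonneg w), sq_nonneg ‖w‖,
          Real.exp_pos ‖w‖, norm_nonneg w]
  · have h1 : ‖Complex.exp w‖ ≤ Real.exp ‖w‖ := by
      rw [Complex.norm_exp]
      exact Real.exp_le_exp.2 ((Complex.re_le_norm w))
    have h2 : (1:ℝ) ≤ Real.exp ‖w‖ := Real.one_le_exp (norm_nonneg w)
    have h3 : ‖w‖ ≤ Real.exp ‖w‖ := (Real.add_one_le_exp ‖w‖).trans' (by linarith [norm_nonneg w])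
    calc ‖Complex.exp w - 1 - w‖ ≤ ‖Complex.exp w‖ + 1 + ‖w‖ := by
          refine (norm_sub_le _ _).trans ?_
          gcongr
          refine (norm_sub_le _ _).trans ?_
          simp
    _ ≤ 3 * Real.exp ‖w‖ := by linarith
    _ ≤ 3 * ‖w‖ ^ 2 * Real.exp ‖w‖ := by
        have h4 : (1:ℝ) ≤ ‖w‖ ^ 2 := by nlinarith
        nlinarith [Real.exp_pos ‖w‖]

lemma interval_le_gauss {θ β M : ℝ} (hθ : 0 < θ) (hβ : 0 < β) {h : ℝ → ℝ}
    (hc : Continuous h) (h0 : ∀ y, 0 ≤ h y)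
    (hle : ∀ y ∈ Set.Icc (-θ) θ, h y ≤ M * Real.exp (-β * y ^ 2)) :
    ∫ y in (-θ)..θ, h y ≤ M * Real.sqrt (π / β) := by
  have hgc : Continuous fun y : ℝ => M * Real.exp (-β * y ^ 2) := by continuity
  have hint : MeasureTheory.Integrable (fun y : ℝ => Real.exp (-β * y ^ 2)) :=
    integrable_exp_neg_mul_sq hβ
  have h1 : ∫ y in (-θ)..θ, h y ≤ ∫ y in (-θ)..θ, M * Real.exp (-β * y ^ 2) :=
    intervalIntegral.integral_mono_on (by linarith) (hc.intervalIntegrable _ _)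
      (hgc.intervalIntegrable _ _) (fun x hx => hle x hx)
  have h2 : ∫ y in (-θ)..θ, M * Real.exp (-β * y ^ 2)
      = ∫ y in Set.Ioc (-θ) θ, M * Real.exp (-β * y ^ 2) :=
    intervalIntegral.integral_of_le (by linarith)
  have h3 : ∫ y in Set.Ioc (-θ) θ, M * Real.exp (-β * y ^ 2)
      ≤ ∫ y : ℝ, M * Real.exp (-β * y ^ 2) := by
    rcases le_or_gt 0 M with hM | hM
    · exact MeasureTheory.setIntegral_le_integral (hint.const_mul M)
        (Filter.Eventually.of_forall fun y => by positivity)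
    · -- M < 0 impossible-ish but handle: h 0 ≤ M * exp 0 contradiction
      exfalso
      have := (h0 0).trans (hle 0 ⟨by linarith, by linarith⟩)
      simp at this
      nlinarith
  have h4 : ∫ y : ℝ, M * Real.exp (-β * y ^ 2) = M * Real.sqrt (π / β) := by
    rw [MeasureTheory.integral_const_mul, integral_gaussian]
  linarith

lemma gauss_tail {θ s : ℝ} (hθ : 0 < θ) (hs : 0 < s) :
    Real.sqrt (π / s) - ∫ y in (-θ)..θ, Real.exp (-s * y ^ 2)
      ∈ Set.Icc (0:ℝ) ((2 / (s * θ ^ 2)) * Real.sqrt (2 * π / s)) := by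
  have hint : MeasureTheory.Integrable (fun y : ℝ => Real.exp (-s * y ^ 2)) :=
    integrable_exp_neg_mul_sq hs
  have key := MeasureTheory.integral_add_compl (measurableSet_Ioc
    (a := -θ) (b := θ)) hint
  have hIoc : ∫ y in (-θ)..θ, Real.exp (-s * y ^ 2)
      = ∫ y in Set.Ioc (-θ) θ, Real.exp (-s * y ^ 2) :=
    intervalIntegral.integral_of_le (by linarith)
  have hgauss : ∫ y : ℝ, Real.exp (-s * y ^ 2) = Real.sqrt (π / s) := integral_gaussian s
  have hdiff : Real.sqrt (π / s) - ∫ y in (-θ)..θ, Real.exp (-s * y ^ 2)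
      = ∫ y in (Set.Ioc (-θ) θ)ᶜ, Real.exp (-s * y ^ 2) := by
    rw [hIoc, ← hgauss, ← key]; ring
  constructor
  · rw [hdiff]
    exact MeasureTheory.setIntegral_nonneg measurableSet_Ioc.compl
      (fun y _ => (Real.exp_pos _).le)
  · rw [hdiff]
    have hint2 : MeasureTheory.Integrable
        (fun y : ℝ => Real.exp (-(s * θ ^ 2) / 2) * Real.exp (-(s / 2) * y ^ 2)) :=
      (integrable_exp_neg_mul_sq (by linarith)).const_mul _
    have step1 : ∫ y in (Set.Ioc (-θ) θ)ᶜ, Real.exp (-s * y ^ 2)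
        ≤ ∫ y in (Set.Ioc (-θ) θ)ᶜ,
            Real.exp (-(s * θ ^ 2) / 2) * Real.exp (-(s / 2) * y ^ 2) := by
      refine MeasureTheory.setIntegral_mono_on hint.integrableOn hint2.integrableOn
        measurableSet_Ioc.compl (fun y hy => ?_)
      have hy2 : θ ^ 2 ≤ y ^ 2 := by
        simp only [Set.mem_compl_iff, Set.mem_Ioc, not_and_or, not_lt, not_le] at hy
        rcases hy with hy | hy
        · nlinarith
        · nlinarith
      rw [← Real.exp_add]
      apply Real.exp_le_exp.2
      nlinarith
    have step2 : ∫ y in (Set.Ioc (-θ) θ)ᶜ,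
          Real.exp (-(s * θ ^ 2) / 2) * Real.exp (-(s / 2) * y ^ 2)
        ≤ ∫ y : ℝ, Real.exp (-(s * θ ^ 2) / 2) * Real.exp (-(s / 2) * y ^ 2) :=
      MeasureTheory.setIntegral_le_integral hint2
        (Filter.Eventually.of_forall fun y => by positivity)
    have step3 : ∫ y : ℝ, Real.exp (-(s * θ ^ 2) / 2) * Real.exp (-(s / 2) * y ^ 2)
        = Real.exp (-(s * θ ^ 2) / 2) * Real.sqrt (2 * π / s) := by
      rw [MeasureTheory.integral_const_mul, integral_gaussian]
      congr 2
      field_simp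
    have step4 : Real.exp (-(s * θ ^ 2) / 2) ≤ 2 / (s * θ ^ 2) := by
      have hx : 0 < s * θ ^ 2 / 2 := by positivity
      have h1 : s * θ ^ 2 / 2 ≤ Real.exp (s * θ ^ 2 / 2) :=
        (Real.add_one_le_exp _).trans' (by linarith)
      rw [show -(s * θ ^ 2) / 2 = -(s * θ ^ 2 / 2) by ring, Real.exp_neg]
      rw [inv_le_comm₀ (Real.exp_pos _) (by positivity)] at *
      · calc (2 / (s * θ ^ 2))⁻¹ = s * θ ^ 2 / 2 := by field_simp
          _ ≤ Real.exp (s * θ ^ 2 / 2) := h1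
    have hsq : 0 ≤ Real.sqrt (2 * π / s) := Real.sqrt_nonneg _
    calc ∫ y in (Set.Ioc (-θ) θ)ᶜ, Real.exp (-s * y ^ 2)
        ≤ Real.exp (-(s * θ ^ 2) / 2) * Real.sqrt (2 * π / s) := by linarith
      _ ≤ (2 / (s * θ ^ 2)) * Real.sqrt (2 * π / s) := by
          exact mul_le_mul_of_nonneg_right step4 hsq

lemma pt2 {s y : ℝ} (hs : 0 < s) :
    s * y ^ 4 * Real.exp (-s * y ^ 2) ≤ 8 / s * Real.exp (-(s / 2) * y ^ 2) := by
  have h := sq_le_exp (t := s * y ^ 2) (by positivity)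
  have e1 : Real.exp (s * y ^ 2 / 2) * Real.exp (-s * y ^ 2) = Real.exp (-(s / 2) * y ^ 2) := by
    rw [← Real.exp_add]; congr 1; ring
  calc s * y ^ 4 * Real.exp (-s * y ^ 2)
      = (s * y ^ 2) ^ 2 * Real.exp (-s * y ^ 2) / s := by field_simp
    _ ≤ 8 * Real.exp (s * y ^ 2 / 2) * Real.exp (-s * y ^ 2) / s := by
        gcongr
    _ = 8 / s * Real.exp (-(s / 2) * y ^ 2) := by rw [← e1]; ring

lemma pt1 {c s y : ℝ} (hc : 0 < c) (hs : 0 < s) :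
    3 * (s ^ 2 * y ^ 6) * Real.exp (-(c * s) * y ^ 2)
      ≤ 144 / (c ^ 3 * s) * Real.exp (-(c * s / 2) * y ^ 2) := by
  have h := cube_le_exp (t := c * s * y ^ 2) (by positivity)
  have e1 : Real.exp (c * s * y ^ 2 / 2) * Real.exp (-(c * s) * y ^ 2)
      = Real.exp (-(c * s / 2) * y ^ 2) := by
    rw [← Real.exp_add]; congr 1; ring
  calc 3 * (s ^ 2 * y ^ 6) * Real.exp (-(c * s) * y ^ 2)
      = 3 * (c * s * y ^ 2) ^ 3 * Real.exp (-(c * s) * y ^ 2) / (c ^ 3 * s) := by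
        field_simp
    _ ≤ 3 * (48 * Real.exp (c * s * y ^ 2 / 2)) * Real.exp (-(c * s) * y ^ 2) / (c ^ 3 * s) := by
        gcongr
    _ = 144 / (c ^ 3 * s) * Real.exp (-(c * s / 2) * y ^ 2) := by rw [← e1]; ring

lemma combine_frac {c s θ X Y : ℝ} (hc : c ≠ 0) (hs : 0 < s) (hθ : θ ≠ 0) :
    144 / (c ^ 3 * s) * (X / Real.sqrt s) + 8 / s * (Y / Real.sqrt s)
      + 2 / (s * θ ^ 2) * (Y / Real.sqrt s)
    = (144 / c ^ 3 * X + 8 * Y + 2 / θ ^ 2 * Y) / (s * Real.sqrt s) := by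
  have h1 : Real.sqrt s ≠ 0 := ne_of_gt (Real.sqrt_pos.2 hs)
  field_simp

lemma core_bound {θ : ℝ} (hθ : 0 < θ) :
    ∃ K : ℝ, 0 < K ∧ ∀ s : ℝ, 0 < s →
      ‖(∫ y in (-θ)..θ, Complex.exp (-(s : ℂ) * (y : ℂ) ^ 2 / (1 + (y : ℂ) * Complex.I)))
        - ((Real.sqrt (π / s) : ℝ) : ℂ)‖ ≤ K / (s * Real.sqrt s) := by
  have hπ : 0 < π := Real.pi_pos
  set q : ℝ := θ / Real.sqrt (1 + θ ^ 2) with hq_def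
  have hsq : 0 < Real.sqrt (1 + θ ^ 2) := Real.sqrt_pos.2 (by positivity)
  have hq0 : 0 < q := div_pos hθ hsq
  have hq1 : q < 1 := by
    rw [div_lt_one hsq]
    have : θ = Real.sqrt (θ ^ 2) := (Real.sqrt_sq hθ.le).symm
    rw [this]
    exact Real.sqrt_lt_sqrt (by positivity) (by nlinarith)
  set c : ℝ := 1 - q with hc_def
  have hc : 0 < c := by simp [hc_def]; linarith
  refine ⟨144 / c ^ 3 * Real.sqrt (2 * π / c) + 8 * Real.sqrt (2 * π)
      + 2 / θ ^ 2 * Real.sqrt (2 * π), by positivity, fun s hs => ?_⟩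
  -- notation
  set a : ℝ → ℂ := fun y => -(s : ℂ) * (y : ℂ) ^ 2 / (1 + (y : ℂ) * Complex.I) with ha_def
  set eb : ℝ → ℝ := fun y => Real.exp (-s * y ^ 2) with heb_def
  set u : ℝ → ℝ := fun y => s * y ^ 4 / (1 + y ^ 2) with hu_def
  set v : ℝ → ℝ := fun y => s * y ^ 3 / (1 + y ^ 2) with hv_def
  set w : ℝ → ℂ := fun y => (s : ℂ) * (y : ℂ) ^ 3 * Complex.I / (1 + (y : ℂ) * Complex.I)
    with hw_def
  have hden : ∀ y : ℝ, (1 : ℂ) + (y : ℂ) * Complex.I ≠ 0 := by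
    intro y h
    have := congrArg Complex.re h
    simp at this
  have h1y2 : ∀ y : ℝ, ((1 : ℂ) + (y : ℂ) ^ 2) ≠ 0 := by
    intro y
    have h0 : ((1 + y ^ 2 : ℝ) : ℂ) ≠ 0 :=
      Complex.ofReal_ne_zero.2 (by positivity)
    push_cast at h0
    exact h0
  have hsplit : ∀ y : ℝ, a y = -(s : ℂ) * (y : ℂ) ^ 2 + w y := by
    intro y
    have hd := hden y
    rw [ha_def, hw_def]
    field_simp
    ring
  have hexpb : ∀ y : ℝ, Complex.exp (-(s : ℂ) * (y : ℂ) ^ 2) = ((eb y : ℝ) : ℂ) := by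
    intro y
    rw [heb_def, Complex.ofReal_exp]
    push_cast
    ring_nf
  have hwuv : ∀ y : ℝ, w y = ((u y : ℝ) : ℂ) + ((v y : ℝ) : ℂ) * Complex.I := by
    intro y
    have hd := hden y
    have hd2 := h1y2 y
    rw [hw_def, hu_def, hv_def]
    push_cast
    field_simp
    ring_nf
    simp [Complex.I_sq]
  have habs_den : ∀ y : ℝ, ‖(1 + (y : ℂ) * Complex.I : ℂ)‖ = Real.sqrt (1 + y ^ 2) := by
    intro y
    have := Complex.norm_add_mul_I 1 y
    rw [show ((1 : ℝ) : ℂ) = (1 : ℂ) by norm_num] at this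
    rw [this]
    norm_num
  have hnormw : ∀ y : ℝ, ‖w y‖ = s * |y| ^ 3 / Real.sqrt (1 + y ^ 2) := by
    intro y
    rw [hw_def]
    simp only [norm_div, norm_mul, Complex.norm_I, norm_pow,
      Complex.norm_real, Real.norm_eq_abs, habs_den]
    rw [abs_of_pos hs]
    ring
  have hsq1 : ∀ y : ℝ, (1 : ℝ) ≤ Real.sqrt (1 + y ^ 2) := by
    intro y
    have h := Real.sqrt_le_sqrt (show (1 : ℝ) ≤ 1 + y ^ 2 by nlinarith)
    simpa using h
  have hw_le1 : ∀ y : ℝ, ‖w y‖ ≤ s * |y| ^ 3 := by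
    intro y
    rw [hnormw y]
    exact div_le_self (by positivity) (hsq1 y)
  have hw_le2 : ∀ y ∈ Set.Icc (-θ) θ, ‖w y‖ ≤ q * (s * y ^ 2) := by
    intro y hy
    have hyθ : |y| ≤ θ := abs_le.2 ⟨hy.1, hy.2⟩
    rw [hnormw y]
    have hsy : 0 < Real.sqrt (1 + y ^ 2) := lt_of_lt_of_le one_pos (hsq1 y)
    rw [div_le_iff₀ hsy, hq_def]
    have hy2 : y ^ 2 ≤ θ ^ 2 := by nlinarith [_root_.sq_abs y, abs_nonneg y]
    have key : |y| * Real.sqrt (1 + θ ^ 2) ≤ θ * Real.sqrt (1 + y ^ 2) := by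
      have h1 : |y| * Real.sqrt (1 + θ ^ 2) = Real.sqrt (y ^ 2 * (1 + θ ^ 2)) := by
        rw [Real.sqrt_mul (sq_nonneg y), Real.sqrt_sq_eq_abs]
      have h2 : θ * Real.sqrt (1 + y ^ 2) = Real.sqrt (θ ^ 2 * (1 + y ^ 2)) := by
        rw [Real.sqrt_mul (sq_nonneg θ), Real.sqrt_sq hθ.le]
      rw [h1, h2]
      exact Real.sqrt_le_sqrt (by nlinarith)
    calc s * |y| ^ 3 = (s * y ^ 2) * |y| := by
          rw [show |y| ^ 3 = y ^ 2 * |y| by rw [← _root_.sq_abs]; ring]; ring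
      _ ≤ (s * y ^ 2) * (θ * Real.sqrt (1 + y ^ 2) / Real.sqrt (1 + θ ^ 2)) := by
          apply mul_le_mul_of_nonneg_left _ (by positivity)
          rw [le_div_iff₀ hsq]
          linarith
      _ = θ / Real.sqrt (1 + θ ^ 2) * (s * y ^ 2) * Real.sqrt (1 + y ^ 2) := by ring
  have hR : ∀ y ∈ Set.Icc (-θ) θ,
      ‖Complex.exp (a y) - ((eb y : ℝ) : ℂ) - ((eb y : ℝ) : ℂ) * w y‖
        ≤ 144 / (c ^ 3 * s) * Real.exp (-(c * s / 2) * y ^ 2) := by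
    intro y hy
    have key : Complex.exp (a y) - ((eb y : ℝ) : ℂ) - ((eb y : ℝ) : ℂ) * w y
        = ((eb y : ℝ) : ℂ) * (Complex.exp (w y) - 1 - w y) := by
      rw [hsplit y, Complex.exp_add, hexpb y]
      ring
    rw [key, norm_mul]
    have hebn : ‖((eb y : ℝ) : ℂ)‖ = eb y := by
      rw [Complex.norm_real, Real.norm_eq_abs, abs_of_pos (Real.exp_pos _)]
    rw [hebn]
    have h1 : ‖Complex.exp (w y) - 1 - w y‖ ≤ 3 * ‖w y‖ ^ 2 * Real.exp ‖w y‖ :=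
      norm_exp_sub_one_sub_le (w y)
    have h2 : ‖w y‖ ^ 2 ≤ s ^ 2 * y ^ 6 := by
      have := hw_le1 y
      have h3 : (s * |y| ^ 3) ^ 2 = s ^ 2 * y ^ 6 := by
        calc (s * |y| ^ 3) ^ 2 = s ^ 2 * (|y| ^ 2) ^ 3 := by ring
          _ = s ^ 2 * (y ^ 2) ^ 3 := by rw [_root_.sq_abs]
          _ = s ^ 2 * y ^ 6 := by ring
      nlinarith [norm_nonneg (w y)]
    have h3 : Real.exp ‖w y‖ ≤ Real.exp (q * (s * y ^ 2)) :=
      Real.exp_le_exp.2 (hw_le2 y hy)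
    calc eb y * ‖Complex.exp (w y) - 1 - w y‖
        ≤ eb y * (3 * (s ^ 2 * y ^ 6) * Real.exp (q * (s * y ^ 2))) := by
          apply mul_le_mul_of_nonneg_left _ (Real.exp_pos _).le
          calc ‖Complex.exp (w y) - 1 - w y‖ ≤ 3 * ‖w y‖ ^ 2 * Real.exp ‖w y‖ := h1
            _ ≤ 3 * (s ^ 2 * y ^ 6) * Real.exp (q * (s * y ^ 2)) := by
                apply mul_le_mul (by nlinarith) h3 (Real.exp_pos _).le (by positivity)
      _ = 3 * (s ^ 2 * y ^ 6) * Real.exp (-(c * s) * y ^ 2) := by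
          rw [heb_def]
          simp only
          rw [mul_comm, mul_assoc, ← Real.exp_add]
          congr 2
          rw [hc_def]
          ring
      _ ≤ 144 / (c ^ 3 * s) * Real.exp (-(c * s / 2) * y ^ 2) := pt1 hc hs
  have hle : (-θ) ≤ θ := by linarith
  -- continuity
  have hconta : Continuous fun y : ℝ => Complex.exp (a y) := by
    apply Complex.continuous_exp.comp
    rw [ha_def]
    exact Continuous.div (by fun_prop) (by fun_prop) hden
  have hconteb : Continuous eb := by rw [heb_def]; fun_prop
  have hcontu : Continuous u := by
    rw [hu_def]
    exact Continuous.div (by fun_prop) (by fun_prop) (fun y => by positivity)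
  have hcontv : Continuous v := by
    rw [hv_def]
    exact Continuous.div (by fun_prop) (by fun_prop) (fun y => by positivity)
  set R : ℝ → ℂ := fun y => Complex.exp (a y) - ((eb y : ℝ) : ℂ)
      - ((eb y * u y : ℝ) : ℂ) - ((eb y * v y : ℝ) : ℂ) * Complex.I with hR_def
  have hcontR : Continuous R := by
    rw [hR_def]
    refine ((hconta.sub (Complex.continuous_ofReal.comp hconteb)).sub
      (Complex.continuous_ofReal.comp (hconteb.mul hcontu))).sub
      ((Complex.continuous_ofReal.comp (hconteb.mul hcontv)).mul continuous_const)
  have hRw : ∀ y : ℝ, R y = Complex.exp (a y) - ((eb y : ℝ) : ℂ) - ((eb y : ℝ) : ℂ) * w y := by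
    intro y
    rw [hR_def]
    simp only
    rw [hwuv y]
    push_cast
    ring
  -- integrability
  have hiR : IntervalIntegrable R MeasureTheory.volume (-θ) θ := hcontR.intervalIntegrable _ _
  have hi2 : IntervalIntegrable (fun y => ((eb y : ℝ) : ℂ)) MeasureTheory.volume (-θ) θ :=
    (Complex.continuous_ofReal.comp hconteb).intervalIntegrable _ _
  have hi3 : IntervalIntegrable (fun y => ((eb y * u y : ℝ) : ℂ)) MeasureTheory.volume (-θ) θ :=
    (Complex.continuous_ofReal.comp (hconteb.mul hcontu)).intervalIntegrable _ _
  have hi4 : IntervalIntegrable (fun y => ((eb y * v y : ℝ) : ℂ) * Complex.I)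
      MeasureTheory.volume (-θ) θ :=
    ((Complex.continuous_ofReal.comp (hconteb.mul hcontv)).mul
      continuous_const).intervalIntegrable _ _
  -- decomposition of the integral
  have hdecomp : (∫ y in (-θ)..θ, Complex.exp (a y))
      = (∫ y in (-θ)..θ, R y) + (((∫ y in (-θ)..θ, eb y : ℝ)) : ℂ)
        + (((∫ y in (-θ)..θ, eb y * u y : ℝ)) : ℂ)
        + (((∫ y in (-θ)..θ, eb y * v y : ℝ)) : ℂ) * Complex.I := by
    have h1 : ∀ y : ℝ, Complex.exp (a y)
        = R y + (((eb y : ℝ) : ℂ) + (((eb y * u y : ℝ) : ℂ) + ((eb y * v y : ℝ) : ℂ) * Complex.I)) := by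
      intro y
      rw [hR_def]
      ring
    rw [intervalIntegral.integral_congr (fun y _ => h1 y)]
    rw [intervalIntegral.integral_add hiR (hi2.add (hi3.add hi4)),
      intervalIntegral.integral_add hi2 (hi3.add hi4),
      intervalIntegral.integral_add hi3 hi4,
      intervalIntegral.integral_mul_const]
    rw [intervalIntegral.integral_ofReal, intervalIntegral.integral_ofReal,
      intervalIntegral.integral_ofReal]
    ring
  -- reality of the integral
  have hsymm : ∀ y : ℝ, (starRingEnd ℂ) (Complex.exp (a y)) = Complex.exp (a (-y)) := by
    intro y
    rw [← Complex.exp_conj]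
    congr 1
    rw [ha_def]
    simp only [map_div₀, map_mul, map_add, map_neg, map_pow, map_one,
      Complex.conj_ofReal, Complex.conj_I]
    push_cast
    ring_nf
  have hreal : (starRingEnd ℂ) (∫ y in (-θ)..θ, Complex.exp (a y))
      = ∫ y in (-θ)..θ, Complex.exp (a y) := by
    calc (starRingEnd ℂ) (∫ y in (-θ)..θ, Complex.exp (a y))
        = ∫ y in (-θ)..θ, (starRingEnd ℂ) (Complex.exp (a y)) := by
          rw [intervalIntegral.integral_of_le hle, intervalIntegral.integral_of_le hle,
            ← integral_conj]
      _ = ∫ y in (-θ)..θ, Complex.exp (a (-y)) :=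
          intervalIntegral.integral_congr (fun y _ => hsymm y)
      _ = ∫ y in (-θ)..θ, Complex.exp (a y) := by
          have := intervalIntegral.integral_comp_neg (a := -θ) (b := θ)
            (fun y => Complex.exp (a y))
          simpa using this
  -- reduce to real part
  have hconjD : (starRingEnd ℂ) ((∫ y in (-θ)..θ, Complex.exp (a y)) - ((Real.sqrt (π / s) : ℝ) : ℂ))
      = (∫ y in (-θ)..θ, Complex.exp (a y)) - ((Real.sqrt (π / s) : ℝ) : ℂ) := by
    rw [map_sub, hreal, Complex.conj_ofReal]
  have hDnorm : ‖(∫ y in (-θ)..θ, Complex.exp (a y)) - ((Real.sqrt (π / s) : ℝ) : ℂ)‖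
      = |((∫ y in (-θ)..θ, Complex.exp (a y)) - ((Real.sqrt (π / s) : ℝ) : ℂ)).re| := by
    have h := Complex.conj_eq_iff_re.1 hconjD
    conv_lhs => rw [← h]
    rw [Complex.norm_real, Real.norm_eq_abs]
  have hDre : ((∫ y in (-θ)..θ, Complex.exp (a y)) - ((Real.sqrt (π / s) : ℝ) : ℂ)).re
      = (∫ y in (-θ)..θ, R y).re + (∫ y in (-θ)..θ, eb y)
      + (∫ y in (-θ)..θ, eb y * u y) - Real.sqrt (π / s) := by
    rw [hdecomp]
    simp
  -- the three bounds
  have hIR : ‖∫ y in (-θ)..θ, R y‖ ≤ 144 / (c ^ 3 * s) * Real.sqrt (π / (c * s / 2)) := by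
    refine le_trans (intervalIntegral.norm_integral_le_integral_norm hle) ?_
    refine interval_le_gauss hθ (by positivity) hcontR.norm (fun y => norm_nonneg _)
      (fun y hy => ?_)
    rw [hRw y]
    exact hR y hy
  have hI2 : (∫ y in (-θ)..θ, eb y * u y) ≤ 8 / s * Real.sqrt (π / (s / 2)) := by
    refine interval_le_gauss hθ (by positivity) (hconteb.mul hcontu)
      (fun y => by rw [heb_def, hu_def]; positivity) (fun y hy => ?_)
    have h1 : eb y * u y ≤ s * y ^ 4 * Real.exp (-s * y ^ 2) := by
      rw [heb_def, hu_def]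
      simp only
      rw [mul_comm]
      apply mul_le_mul_of_nonneg_right _ (Real.exp_pos _).le
      exact div_le_self (by positivity) (by nlinarith [sq_nonneg y])
    exact h1.trans (pt2 hs)
  have hI2pos : 0 ≤ ∫ y in (-θ)..θ, eb y * u y := by
    apply intervalIntegral.integral_nonneg hle
    intro y _
    rw [heb_def, hu_def]
    positivity
  have htail := gauss_tail hθ hs
  have htail' : Real.sqrt (π / s) - (∫ y in (-θ)..θ, eb y) ∈
      Set.Icc (0 : ℝ) (2 / (s * θ ^ 2) * Real.sqrt (2 * π / s)) := by
    rw [heb_def]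
    exact htail
  have hRre : |(∫ y in (-θ)..θ, R y).re| ≤ ‖∫ y in (-θ)..θ, R y‖ := by
    exact Complex.abs_re_le_norm _
  -- put it together
  have habs : |((∫ y in (-θ)..θ, Complex.exp (a y)) - ((Real.sqrt (π / s) : ℝ) : ℂ)).re|
      ≤ 144 / (c ^ 3 * s) * Real.sqrt (π / (c * s / 2))
      + 8 / s * Real.sqrt (π / (s / 2)) + 2 / (s * θ ^ 2) * Real.sqrt (2 * π / s) := by
    obtain ⟨h1a, h1b⟩ := abs_le.1 hRre
    obtain ⟨ht1, ht2⟩ := htail'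
    rw [hDre, abs_le]
    have hb1 : (0:ℝ) ≤ 144 / (c ^ 3 * s) * Real.sqrt (π / (c * s / 2)) := by positivity
    constructor <;> linarith [hIR, hI2, hI2pos]
  -- convert to the final form
  have hss : 0 < Real.sqrt s := Real.sqrt_pos.2 hs
  have e1 : Real.sqrt (π / (c * s / 2)) = Real.sqrt (2 * π / c) / Real.sqrt s := by
    rw [show π / (c * s / 2) = (2 * π / c) / s by field_simp, Real.sqrt_div (by positivity)]
  have e2 : Real.sqrt (π / (s / 2)) = Real.sqrt (2 * π) / Real.sqrt s := by
    rw [show π / (s / 2) = (2 * π) / s by field_simp, Real.sqrt_div (by positivity)]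
  have e3 : Real.sqrt (2 * π / s) = Real.sqrt (2 * π) / Real.sqrt s := by
    rw [Real.sqrt_div (by positivity)]
  show ‖(∫ y in (-θ)..θ, Complex.exp (a y)) - ((Real.sqrt (π / s) : ℝ) : ℂ)‖ ≤ _
  rw [hDnorm]
  calc |((∫ y in (-θ)..θ, Complex.exp (a y)) - ((Real.sqrt (π / s) : ℝ) : ℂ)).re|
      ≤ 144 / (c ^ 3 * s) * Real.sqrt (π / (c * s / 2))
      + 8 / s * Real.sqrt (π / (s / 2)) + 2 / (s * θ ^ 2) * Real.sqrt (2 * π / s) := habs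
    _ = (144 / c ^ 3 * Real.sqrt (2 * π / c) + 8 * Real.sqrt (2 * π)
        + 2 / θ ^ 2 * Real.sqrt (2 * π)) / (s * Real.sqrt s) := by
        rw [e1, e2, e3]
        exact combine_frac (ne_of_gt hc) hs (ne_of_gt hθ)

lemma coeff_eq {B p r sB sp sr E : ℝ} (hB : sB * sB = B) (hp : sp * sp = p)
    (hsB : 0 < sB) (hsp : 0 < sp) (hr : 0 < r) (hsr : 0 < sr) :
    sB / (2 * sp) * (1 / (r * sr)) * E = B / r / (2 * p) * (E * (sp / (sB * sr))) := by
  subst hB hp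
  field_simp

lemma final_eq {B r sB sr K E p : ℝ} (hB : sB * sB = B) (hsB : 0 < sB) (hr : 0 < r)
    (hsr : 0 < sr) (hp : 0 < p) :
    B / r / (2 * p) * E * (K / (B * r * (sB * sr)))
      = K / (2 * p * sB) * (1 / (r * sr) * E * (1 / r)) := by
  subst hB
  field_simp


/-- The contour integral (1/2πi)∫_{C₁(B/√n)} e^{B²/z+nz} dz, where
C₁(η) = {η(1+iy) : |y| ≤ θ} is parametrized by y (dz = iη dy), so that
(1/2πi)∫ = (η/2π)∫_{-θ}^{θ} e^{B²/z(y)+nz(y)} dy with z(y) = η(1+iy). -/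
noncomputable def saddleIntegral0 (B θ : ℝ) (n : ℕ) : ℂ :=
  ((B / Real.sqrt n) / (2 * π) : ℝ) *
    ∫ y in (-θ)..θ,
      Complex.exp (((B : ℂ) ^ 2) / (((B / Real.sqrt n : ℝ) : ℂ) * (1 + (y : ℂ) * Complex.I)) +
        (n : ℂ) * (((B / Real.sqrt n : ℝ) : ℂ) * (1 + (y : ℂ) * Complex.I)))

/-- The case A = 0, R = 1 of the saddle point lemma:
(1/2πi)∫_{C₁(B/√n)} e^{B²/z+nz} dz = (√B/(2√π)) n^{-3/4} e^{2B√n} (1 + O(n^{-1/2})). -/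
theorem saddle_point_asymp_special (B θ : ℝ) (hB : 0 < B) (hθ : 0 < θ) :
    (fun n : ℕ => saddleIntegral0 B θ n -
        ((Real.sqrt B / (2 * Real.sqrt π) * (n : ℝ) ^ (-(3 : ℝ) / 4) *
          Real.exp (2 * B * Real.sqrt n) : ℝ) : ℂ)) =O[atTop]
      (fun n : ℕ => (n : ℝ) ^ (-(3 : ℝ) / 4) * Real.exp (2 * B * Real.sqrt n) *
        (n : ℝ) ^ (-(1 : ℝ) / 2)) := by
  obtain ⟨K, hK, hcore⟩ := core_bound hθ
  rw [Asymptotics.isBigO_iff]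
  refine ⟨K / (2 * π * Real.sqrt B), ?_⟩
  filter_upwards [Filter.eventually_ge_atTop 1] with n hn
  have hn0 : (0 : ℝ) < (n : ℝ) := by exact_mod_cast Nat.lt_of_lt_of_le Nat.zero_lt_one hn
  set r : ℝ := Real.sqrt (n : ℝ) with hr_def
  have hr : 0 < r := Real.sqrt_pos.2 hn0
  have hr2 : r ^ 2 = (n : ℝ) := Real.sq_sqrt hn0.le
  have hs : 0 < B * r := mul_pos hB hr
  have hsB : 0 < Real.sqrt B := Real.sqrt_pos.2 hB
  have hsr : 0 < Real.sqrt r := Real.sqrt_pos.2 hr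
  have hsπ : 0 < Real.sqrt π := Real.sqrt_pos.2 Real.pi_pos
  have hπ := Real.pi_pos
  -- rpow facts
  have h12 : (n : ℝ) ^ ((1 : ℝ) / 2) = r := by rw [hr_def, Real.sqrt_eq_rpow]
  have h14 : (n : ℝ) ^ ((1 : ℝ) / 4) = Real.sqrt r := by
    rw [hr_def, Real.sqrt_eq_rpow, Real.sqrt_eq_rpow, ← Real.rpow_mul hn0.le]
    norm_num
  have hn34 : (n : ℝ) ^ (-(3 : ℝ) / 4) = 1 / (r * Real.sqrt r) := by
    rw [show (-(3 : ℝ) / 4) = -((1 : ℝ) / 2 + (1 : ℝ) / 4) by norm_num,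
      Real.rpow_neg hn0.le, Real.rpow_add hn0, h12, h14, one_div]
  have hn12 : (n : ℝ) ^ (-(1 : ℝ) / 2) = 1 / r := by
    rw [show (-(1 : ℝ) / 2) = -((1 : ℝ) / 2) by norm_num, Real.rpow_neg hn0.le, h12, one_div]
  -- integrand rewrite
  have hden : ∀ y : ℝ, (1 : ℂ) + (y : ℂ) * Complex.I ≠ 0 := by
    intro y h
    have := congrArg Complex.re h
    simp at this
  have hintegrand : ∀ y : ℝ,
      Complex.exp (((B : ℂ) ^ 2) / (((B / r : ℝ) : ℂ) * (1 + (y : ℂ) * Complex.I)) +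
          (n : ℂ) * (((B / r : ℝ) : ℂ) * (1 + (y : ℂ) * Complex.I)))
        = Complex.exp (((2 * (B * r) : ℝ) : ℂ))
          * Complex.exp (-((B * r : ℝ) : ℂ) * (y : ℂ) ^ 2 / (1 + (y : ℂ) * Complex.I)) := by
    intro y
    rw [← Complex.exp_add]
    congr 1
    have hBC : (B : ℂ) ≠ 0 := Complex.ofReal_ne_zero.2 hB.ne'
    have hrC : ((r : ℝ) : ℂ) ≠ 0 := Complex.ofReal_ne_zero.2 hr.ne'
    have hnC : ((n : ℕ) : ℂ) = ((r : ℝ) : ℂ) ^ 2 := by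
      rw [show ((n : ℕ) : ℂ) = (((n : ℝ) : ℝ) : ℂ) by push_cast; ring, ← hr2]
      push_cast
      ring
    rw [hnC]
    have hd := hden y
    push_cast
    field_simp
    ring_nf
    simp [Complex.I_sq, show Complex.I ^ 3 = -Complex.I by rw [pow_succ, Complex.I_sq]; ring]
    ring
  have hSI : saddleIntegral0 B θ n
      = (((B / r) / (2 * π) : ℝ) : ℂ) * (Complex.exp (((2 * (B * r) : ℝ) : ℂ))
        * ∫ y in (-θ)..θ, Complex.exp (-((B * r : ℝ) : ℂ) * (y : ℂ) ^ 2
            / (1 + (y : ℂ) * Complex.I))) := by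
    rw [saddleIntegral0]
    rw [intervalIntegral.integral_congr (fun y _ => hintegrand y)]
    rw [intervalIntegral.integral_const_mul]
  -- main term rewrite
  have hBs : Real.sqrt B * Real.sqrt B = B := Real.mul_self_sqrt hB.le
  have hπs : Real.sqrt π * Real.sqrt π = π := Real.mul_self_sqrt hπ.le
  have hsqrtπs : Real.sqrt (π / (B * r)) = Real.sqrt π / (Real.sqrt B * Real.sqrt r) := by
    rw [Real.sqrt_div hπ.le, Real.sqrt_mul hB.le]
  have hre : Real.sqrt B / (2 * Real.sqrt π) * (n : ℝ) ^ (-(3 : ℝ) / 4)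
        * Real.exp (2 * B * r)
      = (B / r) / (2 * π) * (Real.exp (2 * (B * r)) * Real.sqrt (π / (B * r))) := by
    rw [hn34, hsqrtπs, show (2 : ℝ) * B * r = 2 * (B * r) by ring]
    exact coeff_eq hBs hπs hsB hsπ hr hsr
  have hmain : ((Real.sqrt B / (2 * Real.sqrt π) * (n : ℝ) ^ (-(3 : ℝ) / 4) *
        Real.exp (2 * B * Real.sqrt (n : ℝ)) : ℝ) : ℂ)
      = (((B / r) / (2 * π) : ℝ) : ℂ) * (Complex.exp (((2 * (B * r) : ℝ) : ℂ))
        * ((Real.sqrt (π / (B * r)) : ℝ) : ℂ)) := by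
    rw [← hr_def, hre]
    rw [Complex.ofReal_mul, Complex.ofReal_mul, Complex.ofReal_exp]
  -- the difference
  rw [hSI, hmain]
  have hdiff : (((B / r) / (2 * π) : ℝ) : ℂ) * (Complex.exp (((2 * (B * r) : ℝ) : ℂ))
        * ∫ y in (-θ)..θ, Complex.exp (-((B * r : ℝ) : ℂ) * (y : ℂ) ^ 2
            / (1 + (y : ℂ) * Complex.I)))
      - (((B / r) / (2 * π) : ℝ) : ℂ) * (Complex.exp (((2 * (B * r) : ℝ) : ℂ))
        * ((Real.sqrt (π / (B * r)) : ℝ) : ℂ))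
      = (((B / r) / (2 * π) : ℝ) : ℂ) * Complex.exp (((2 * (B * r) : ℝ) : ℂ))
        * ((∫ y in (-θ)..θ, Complex.exp (-((B * r : ℝ) : ℂ) * (y : ℂ) ^ 2
            / (1 + (y : ℂ) * Complex.I))) - ((Real.sqrt (π / (B * r)) : ℝ) : ℂ)) := by
    ring
  rw [hdiff, norm_mul, norm_mul]
  have hnc : ‖(((B / r) / (2 * π) : ℝ) : ℂ)‖ = (B / r) / (2 * π) := by
    rw [Complex.norm_real, Real.norm_eq_abs, abs_of_pos (by positivity)]
  have hne : ‖Complex.exp (((2 * (B * r) : ℝ) : ℂ))‖ = Real.exp (2 * (B * r)) := by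
    rw [Complex.norm_exp, Complex.ofReal_re]
  rw [hnc, hne]
  have hKs := hcore (B * r) hs
  have hssq : Real.sqrt (B * r) = Real.sqrt B * Real.sqrt r := Real.sqrt_mul hB.le r
  -- RHS norm
  have hrhs : ‖(n : ℝ) ^ (-(3 : ℝ) / 4) * Real.exp (2 * B * Real.sqrt (n : ℝ)) *
      (n : ℝ) ^ (-(1 : ℝ) / 2)‖
      = 1 / (r * Real.sqrt r) * Real.exp (2 * (B * r)) * (1 / r) := by
    rw [← hr_def, hn34, hn12, show (2 : ℝ) * B * r = 2 * (B * r) by ring]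
    rw [Real.norm_eq_abs, abs_of_pos (by positivity)]
  rw [hrhs]
  calc (B / r) / (2 * π) * Real.exp (2 * (B * r))
      * ‖(∫ y in (-θ)..θ, Complex.exp (-((B * r : ℝ) : ℂ) * (y : ℂ) ^ 2
          / (1 + (y : ℂ) * Complex.I))) - ((Real.sqrt (π / (B * r)) : ℝ) : ℂ)‖
      ≤ (B / r) / (2 * π) * Real.exp (2 * (B * r))
        * (K / (B * r * Real.sqrt (B * r))) := by
        apply mul_le_mul_of_nonneg_left hKs (by positivity)
    _ = K / (2 * π * Real.sqrt B) * (1 / (r * Real.sqrt r) * Real.exp (2 * (B * r)) * (1 / r)) := by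
        rw [hssq]
        exact final_eq hBs hsB hr hsr hπ
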